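/- Let a, b be in the Wiener class and let E_a, E_b be compact operators on ℓ². Set A = T(a) + E_a and B = T(b) + E_b, and let c be the convolution of a and b. Then the operator AB − T(c) is a compact operator on ℓ². (In particular, the product of two Quasi-Toeplitz matrices is again a Quasi-Toeplitz matrix.) -/

import Mathlib

/-- The bounded operator `T` on `ℓ²` is the Toeplitz operator with symbol coefficients
`a : ℤ → ℂ`, i.e. `(T x)_i = ∑_{j} a_{j-i} x_j` (indices in `ℕ`). -/
def IsToeplitzOp (T : lp (fun _ : ℕ => ℂ) 2 →L[ℂ] lp (fun _ : ℕ => ℂ) 2)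
    (a : ℤ → ℂ) : Prop :=
  ∀ (x : lp (fun _ : ℕ => ℂ) 2) (i : ℕ), (T x) i = ∑' j : ℕ, a ((j : ℤ) - (i : ℤ)) * x j

open scoped ENNReal

set_option maxHeartbeats 1000000

noncomputable section

abbrev ℓ2 : Type := lp (fun _ : ℕ => ℂ) 2

lemma two_toReal : ((2 : ℝ≥0∞)).toReal = (2:ℝ) := by norm_num

/-- evaluation at a coordinate as a CLM -/
def evalCLM (i : ℕ) : ℓ2 →L[ℂ] ℂ :=
  LinearMap.mkContinuous
    { toFun := fun x => x i
      map_add' := fun x y => by simp [lp.coeFn_add]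
      map_smul' := fun c x => by simp [lp.coeFn_smul] }
    1 (fun x => by rw [one_mul]; exact lp.norm_apply_le_norm (by norm_num) x i)

@[simp] lemma evalCLM_apply (i : ℕ) (x : ℓ2) : evalCLM i x = x i := rfl

/-- the selection function underlying `selOp` -/
def Rfun (P Q : ℕ) (x : ℓ2) : ℕ → ℂ :=
  fun i => if i ≤ P ∧ P ≤ Q + i then x (Q + i - P) else 0

lemma Rfun_sum_le (P Q : ℕ) (x : ℓ2) (s : Finset ℕ) :
    ∑ i ∈ s, ‖Rfun P Q x i‖ ^ ((2:ℝ≥0∞)).toReal ≤ ‖x‖ ^ ((2:ℝ≥0∞)).toReal := by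
  classical
  set t := s.filter (fun i => i ≤ P ∧ P ≤ Q + i) with ht
  have h1 : ∑ i ∈ s, ‖Rfun P Q x i‖ ^ ((2:ℝ≥0∞)).toReal
      = ∑ i ∈ t, ‖x (Q + i - P)‖ ^ ((2:ℝ≥0∞)).toReal := by
    rw [ht, Finset.sum_filter]
    refine Finset.sum_congr rfl fun i _ => ?_
    by_cases h : i ≤ P ∧ P ≤ Q + i
    · simp [Rfun, h]
    · simp [Rfun, h, Real.zero_rpow (by norm_num : ((2:ℝ≥0∞)).toReal ≠ 0)]
  have hinj : ∀ i ∈ t, ∀ j ∈ t, Q + i - P = Q + j - P → i = j := by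
    intro i hi j hj hij
    obtain ⟨-, hi1, hi2⟩ := Finset.mem_filter.mp hi
    obtain ⟨-, hj1, hj2⟩ := Finset.mem_filter.mp hj
    omega
  have h2 := Finset.sum_image (f := fun j : ℕ => ‖x j‖ ^ ((2:ℝ≥0∞)).toReal) hinj
  rw [h1, ← h2]
  exact lp.sum_rpow_le_norm_rpow (by norm_num) x _

lemma Rfun_memℓp (P Q : ℕ) (x : ℓ2) : Memℓp (Rfun P Q x) 2 :=
  memℓp_gen' (Rfun_sum_le P Q x)

/-- the coordinate-selection operator -/
def selOp (P Q : ℕ) : ℓ2 →L[ℂ] ℓ2 :=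
  LinearMap.mkContinuous
    { toFun := fun x => (⟨Rfun P Q x, Rfun_memℓp P Q x⟩ : ℓ2)
      map_add' := fun x y => by
        apply lp.ext
        funext i
        simp only [Rfun, lp.coeFn_add, Pi.add_apply]
        split_ifs <;> simp
      map_smul' := fun c x => by
        apply lp.ext
        funext i
        simp only [Rfun, lp.coeFn_smul, Pi.smul_apply, RingHom.id_apply]
        split_ifs <;> simp }
    1 (fun x => by
      refine le_trans (lp.norm_le_of_forall_sum_le (by norm_num) (norm_nonneg x)
        (fun s => Rfun_sum_le P Q x s)) (by simp))

@[simp] lemma selOp_apply (P Q : ℕ) (x : ℓ2) (i : ℕ) :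
    selOp P Q x i = if i ≤ P ∧ P ≤ Q + i then x (Q + i - P) else 0 := rfl

lemma selOp_norm_le (P Q : ℕ) : ‖selOp P Q‖ ≤ 1 :=
  LinearMap.mkContinuous_norm_le _ zero_le_one _

/-- the projection onto finitely many (shifted) coordinates -/
def projOp (P Q : ℕ) : ℓ2 →L[ℂ] (Fin (P+1) → ℂ) :=
  ContinuousLinearMap.pi fun k =>
    if P ≤ Q + (k : ℕ) then evalCLM (Q + (k : ℕ) - P) else 0

lemma projOp_apply (P Q : ℕ) (x : ℓ2) (k : Fin (P+1)) :
    projOp P Q x k = if P ≤ Q + (k : ℕ) then x (Q + (k : ℕ) - P) else 0 := by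
  simp only [projOp, ContinuousLinearMap.pi_apply]
  split_ifs <;> simp

lemma projOp_isCompact (P Q : ℕ) : IsCompactOperator (projOp P Q) := by
  refine ⟨Metric.closedBall 0 ‖projOp P Q‖, isCompact_closedBall _ _, ?_⟩
  refine Filter.mem_of_superset (Metric.closedBall_mem_nhds (0:ℓ2) one_pos) ?_
  intro x hx
  simp only [Metric.mem_closedBall, dist_zero_right] at hx
  simp only [Set.mem_preimage, Metric.mem_closedBall, dist_zero_right]
  calc ‖projOp P Q x‖ ≤ ‖projOp P Q‖ * ‖x‖ := (projOp P Q).le_opNorm x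
    _ ≤ ‖projOp P Q‖ * 1 := by
        exact mul_le_mul_of_nonneg_left hx (norm_nonneg _)
    _ = ‖projOp P Q‖ := mul_one _

/-- inclusion of finitely many coordinates back into ℓ² -/
def inclMap (P : ℕ) : (Fin (P+1) → ℂ) →ₗ[ℂ] ℓ2 where
  toFun v := ∑ k : Fin (P+1), lp.single 2 (k : ℕ) (v k)
  map_add' v w := by
    rw [← Finset.sum_add_distrib]
    refine Finset.sum_congr rfl fun k _ => ?_
    apply lp.ext
    funext i
    by_cases h : i = (k : ℕ)
    · subst h; simp [lp.single_apply_self, lp.coeFn_add]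
    · simp [lp.single_apply_ne _ _ _ h, lp.coeFn_add]
  map_smul' c v := by
    simp only [RingHom.id_apply]
    rw [Finset.smul_sum]
    refine Finset.sum_congr rfl fun k _ => ?_
    rw [Pi.smul_apply, lp.single_smul]

lemma inclMap_apply (P : ℕ) (v : Fin (P+1) → ℂ) (i : ℕ) :
    (inclMap P v : ℓ2) i = if h : i < P + 1 then v ⟨i, h⟩ else 0 := by
  classical
  have : (inclMap P v : ℓ2) i = ∑ k : Fin (P+1), (lp.single 2 (k:ℕ) (v k) : ℓ2) i := by
    simp only [inclMap, LinearMap.coe_mk, AddHom.coe_mk]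
    rw [lp.coeFn_sum]
    simp
  rw [this]
  by_cases h : i < P + 1
  · rw [Finset.sum_eq_single (⟨i, h⟩ : Fin (P+1))]
    · simp [lp.single_apply_self, h]
    · intro k _ hk
      refine lp.single_apply_ne _ _ _ (fun hik => hk ?_)
      have hki : (k : ℕ) = i := by simpa using hik.symm
      exact Fin.ext (by simp [hki])
    · simp
  · simp only [h, dif_neg, not_false_iff]
    refine Finset.sum_eq_zero fun k _ => ?_
    refine lp.single_apply_ne _ _ _ (fun hik => h ?_)
    rw [hik]; exact k.isLt

lemma selOp_isCompact (P Q : ℕ) : IsCompactOperator (selOp P Q) := by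
  have hincl : IsCompactOperator
      ((LinearMap.toContinuousLinearMap (inclMap P)) ∘ (projOp P Q)) :=
    (projOp_isCompact P Q).clm_comp (LinearMap.toContinuousLinearMap (inclMap P))
  have heq : ⇑(selOp P Q) =
      ((LinearMap.toContinuousLinearMap (inclMap P)) ∘ (projOp P Q)) := by
    funext x
    apply lp.ext
    funext i
    simp only [Function.comp_apply, LinearMap.coe_toContinuousLinearMap']
    rw [inclMap_apply, selOp_apply]
    by_cases h : i < P + 1
    · rw [dif_pos h, projOp_apply]
      simp only
      by_cases h2 : P ≤ Q + i
      · rw [if_pos h2, if_pos ⟨Nat.lt_succ_iff.mp h, h2⟩]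
      · rw [if_neg h2, if_neg (fun hh => h2 hh.2)]
    · rw [dif_neg h, if_neg (fun hh => h (Nat.lt_succ_iff.mpr hh.1))]
  rw [heq]
  exact hincl

variable {a b : ℤ → ℂ}

section D
variable (a b)
/-- the family of finite-rank pieces -/
def phiOp (pq : ℕ × ℕ) : ℓ2 →L[ℂ] ℓ2 :=
  (a (-(pq.1 + 1)) * b (pq.2 + 1)) • selOp pq.1 pq.2
end D

lemma phiOp_summable (ha : Summable fun k : ℤ => ‖a k‖) (hb : Summable fun k : ℤ => ‖b k‖) :
    Summable (phiOp a b) := by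
  have ha' : Summable fun P : ℕ => ‖a (-(P + 1 : ℕ) : ℤ)‖ := by
    apply ha.comp_injective
    intro m n h
    simpa using h
  have hb' : Summable fun Q : ℕ => ‖b ((Q + 1 : ℕ) : ℤ)‖ := by
    apply hb.comp_injective
    intro m n h
    simpa using h
  have hbound : Summable fun pq : ℕ × ℕ =>
      ‖a (-(pq.1 + 1 : ℕ) : ℤ)‖ * ‖b ((pq.2 + 1 : ℕ) : ℤ)‖ :=
    ha'.mul_of_nonneg hb' (fun _ => norm_nonneg _) (fun _ => norm_nonneg _)
  refine Summable.of_norm_bounded hbound ?_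
  intro pq
  calc ‖phiOp a b pq‖ ≤ ‖a (-(pq.1 + 1)) * b (pq.2 + 1)‖ * ‖selOp pq.1 pq.2‖ :=
        ContinuousLinearMap.opNorm_smul_le _ _
    _ ≤ ‖a (-(pq.1 + 1))‖ * ‖b (pq.2 + 1)‖ * 1 := by
        rw [norm_mul]
        exact mul_le_mul_of_nonneg_left (selOp_norm_le _ _) (by positivity)
    _ = ‖a (-(pq.1 + 1 : ℕ) : ℤ)‖ * ‖b ((pq.2 + 1 : ℕ) : ℤ)‖ := by push_cast; ring

/-- the compact correction operator -/
def DOp (a b : ℤ → ℂ) : ℓ2 →L[ℂ] ℓ2 := ∑' pq : ℕ × ℕ, phiOp a b pq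

lemma DOp_isCompact (ha : Summable fun k : ℤ => ‖a k‖) (hb : Summable fun k : ℤ => ‖b k‖) :
    IsCompactOperator (DOp a b) := by
  have hsum := (phiOp_summable ha hb).hasSum
  refine isCompactOperator_of_tendsto hsum ?_
  have hterm : ∀ pq : ℕ × ℕ, IsCompactOperator ⇑(phiOp a b pq) := by
    intro pq
    rw [phiOp, ContinuousLinearMap.coe_smul']
    exact (selOp_isCompact _ _).smul _
  filter_upwards with s
  induction s using Finset.induction_on with
  | empty => simpa using isCompactOperator_zero
  | insert _ _ h ih =>
      rw [Finset.sum_insert h, ContinuousLinearMap.coe_add']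
      exact (hterm _).add ih

lemma DOp_apply_coord (ha : Summable fun k : ℤ => ‖a k‖) (hb : Summable fun k : ℤ => ‖b k‖)
    (x : ℓ2) (i : ℕ) :
    (DOp a b x) i = ∑' pq : ℕ × ℕ, (a (-(pq.1 + 1)) * b (pq.2 + 1)) *
      (if i ≤ pq.1 ∧ pq.1 ≤ pq.2 + i then x (pq.2 + i - pq.1) else 0) := by
  have hsum := (phiOp_summable ha hb).hasSum
  have h1 : HasSum (fun pq => phiOp a b pq x) (DOp a b x) :=
    hsum.mapL (ContinuousLinearMap.apply ℂ ℓ2 x)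
  have h2 := h1.mapL (evalCLM i)
  simp only [evalCLM_apply] at h2
  rw [← h2.tsum_eq]
  refine tsum_congr fun pq => ?_
  rw [phiOp, ContinuousLinearMap.smul_apply, lp.coeFn_smul, Pi.smul_apply,
    selOp_apply, smul_eq_mul]

lemma x_sq_summable (x : ℓ2) : Summable fun j : ℕ => ‖x j‖ ^ 2 := by
  have h := (lp.memℓp x).summable (p := 2) (by norm_num)
  have h2 : ∀ j : ℕ, ‖x j‖ ^ ((2:ℝ≥0∞)).toReal = ‖x j‖ ^ 2 := by
    intro j
    rw [show ((2:ℝ≥0∞)).toReal = ((2:ℕ):ℝ) by norm_num, Real.rpow_natCast]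
  exact (summable_congr h2).mp h

lemma b_sq_summable (hb : Summable fun k : ℤ => ‖b k‖) :
    Summable fun m : ℤ => ‖b m‖ ^ 2 := by
  refine Summable.of_nonneg_of_le (fun m => sq_nonneg _) (fun m => ?_) (hb.mul_left (∑' k, ‖b k‖))
  rw [sq]
  exact mul_le_mul_of_nonneg_right (Summable.le_tsum hb m fun _ _ => norm_nonneg _) (norm_nonneg _)

lemma b_shift_sq_summable (hb : Summable fun k : ℤ => ‖b k‖) (k : ℤ) :
    Summable fun j : ℕ => ‖b ((j : ℤ) - k)‖ ^ 2 := by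
  apply (b_sq_summable hb).comp_injective
  intro m n h
  have : (m : ℤ) - k = (n : ℤ) - k := h
  omega

lemma bx_summable (hb : Summable fun k : ℤ => ‖b k‖) (x : ℓ2) (k : ℤ) :
    Summable fun j : ℕ => ‖b ((j : ℤ) - k)‖ * ‖x j‖ := by
  refine Summable.of_nonneg_of_le (fun j => mul_nonneg (norm_nonneg _) (norm_nonneg _))
    (fun j => ?_) ((b_shift_sq_summable hb k).add (x_sq_summable x))
  nlinarith [sq_nonneg (‖b ((j : ℤ) - k)‖ - ‖x j‖), norm_nonneg (b ((j:ℤ) - k)), norm_nonneg (x j)]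

lemma bx_tsum_le (hb : Summable fun k : ℤ => ‖b k‖) (x : ℓ2) (k : ℤ) :
    ∑' j : ℕ, ‖b ((j : ℤ) - k)‖ * ‖x j‖ ≤ (∑' m : ℤ, ‖b m‖ ^ 2) + ∑' j : ℕ, ‖x j‖ ^ 2 := by
  calc ∑' j : ℕ, ‖b ((j : ℤ) - k)‖ * ‖x j‖
      ≤ ∑' j : ℕ, (‖b ((j : ℤ) - k)‖ ^ 2 + ‖x j‖ ^ 2) := by
        refine Summable.tsum_le_tsum (fun j => ?_) (bx_summable hb x k)
          ((b_shift_sq_summable hb k).add (x_sq_summable x))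
        nlinarith [sq_nonneg (‖b ((j : ℤ) - k)‖ - ‖x j‖)]
    _ = (∑' j : ℕ, ‖b ((j : ℤ) - k)‖ ^ 2) + ∑' j : ℕ, ‖x j‖ ^ 2 :=
        Summable.tsum_add (b_shift_sq_summable hb k) (x_sq_summable x)
    _ ≤ (∑' m : ℤ, ‖b m‖ ^ 2) + ∑' j : ℕ, ‖x j‖ ^ 2 := by
        refine add_le_add ?_ le_rfl
        refine Summable.tsum_le_tsum_of_inj (fun j : ℕ => (j : ℤ) - k) ?_ (fun c _ => sq_nonneg _)
          (fun j => le_refl _) (b_shift_sq_summable hb k) (b_sq_summable hb)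
        intro m n h
        have : (m : ℤ) - k = (n : ℤ) - k := h
        omega

/-- The master double family. -/
def Ffam (a b : ℤ → ℂ) (x : ℓ2) (i : ℕ) : ℤ × ℕ → ℂ :=
  fun kj => a (kj.1 - (i : ℤ)) * (b ((kj.2 : ℤ) - kj.1) * x kj.2)

lemma Ffam_summable (ha : Summable fun k : ℤ => ‖a k‖) (hb : Summable fun k : ℤ => ‖b k‖)
    (x : ℓ2) (i : ℕ) : Summable (Ffam a b x i) := by
  set M : ℝ := (∑' m : ℤ, ‖b m‖ ^ 2) + ∑' j : ℕ, ‖x j‖ ^ 2 with hM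
  have hnorm : ∀ kj : ℤ × ℕ, ‖Ffam a b x i kj‖
      = ‖a (kj.1 - (i : ℤ))‖ * (‖b ((kj.2 : ℤ) - kj.1)‖ * ‖x kj.2‖) := by
    intro kj
    rw [Ffam, norm_mul, norm_mul]
  refine Summable.of_norm ?_
  rw [summable_congr hnorm]
  rw [summable_prod_of_nonneg (fun kj => mul_nonneg (norm_nonneg _)
    (mul_nonneg (norm_nonneg _) (norm_nonneg _)))]
  constructor
  · intro k
    simpa using (bx_summable hb x k).mul_left ‖a (k - (i:ℤ))‖
  · dsimp only
    have hc : ∀ k : ℤ, ∑' j : ℕ, ‖a (k - (i:ℤ))‖ * (‖b ((j:ℤ) - k)‖ * ‖x j‖)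
        = ‖a (k - (i:ℤ))‖ * ∑' j : ℕ, ‖b ((j:ℤ) - k)‖ * ‖x j‖ := fun k => tsum_mul_left
    rw [summable_congr hc]
    have hasum : Summable fun k : ℤ => ‖a (k - (i:ℤ))‖ * M := by
      apply Summable.mul_right
      apply ha.comp_injective
      intro m n h
      have : (m : ℤ) - i = (n : ℤ) - i := h
      omega
    refine Summable.of_nonneg_of_le
      (fun k => mul_nonneg (norm_nonneg _) (tsum_nonneg fun j =>
        mul_nonneg (norm_nonneg _) (norm_nonneg _))) (fun k => ?_) hasum
    exact mul_le_mul_of_nonneg_left (bx_tsum_le hb x k) (norm_nonneg _)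

lemma key_identity (ha : Summable fun k : ℤ => ‖a k‖) (hb : Summable fun k : ℤ => ‖b k‖)
    {c : ℤ → ℂ} (hc : ∀ k : ℤ, c k = ∑' m : ℤ, a m * b (k - m)) (x : ℓ2) (i : ℕ) :
    ∑' j : ℕ, c ((j : ℤ) - (i : ℤ)) * x j
      = (∑' k : ℕ, a ((k : ℤ) - (i : ℤ)) * ∑' j : ℕ, b ((j : ℤ) - (k : ℤ)) * x j)
        + ∑' pq : ℕ × ℕ, (a (-(pq.1 + 1)) * b (pq.2 + 1)) *
            (if i ≤ pq.1 ∧ pq.1 ≤ pq.2 + i then x (pq.2 + i - pq.1) else 0) := by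
  have hF := Ffam_summable ha hb x i
  -- Step 1: rewrite LHS as an iterated sum over ℤ × ℕ
  have step1 : ∀ j : ℕ, c ((j : ℤ) - (i : ℤ)) * x j = ∑' k : ℤ, Ffam a b x i (k, j) := by
    intro j
    have e1 : ∑' k : ℤ, Ffam a b x i (k, j)
        = (∑' k : ℤ, a (k - (i:ℤ)) * b ((j:ℤ) - k)) * x j := by
      rw [← tsum_mul_right]
      exact tsum_congr fun k => (mul_assoc _ _ _).symm
    have e2 : ∑' k : ℤ, a (k - (i:ℤ)) * b ((j:ℤ) - k)
        = ∑' m : ℤ, a m * b ((j:ℤ) - (i:ℤ) - m) := by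
      rw [← (Equiv.addRight (i:ℤ)).tsum_eq (fun k => a (k - (i:ℤ)) * b ((j:ℤ) - k))]
      refine tsum_congr fun m => ?_
      simp only [Equiv.coe_addRight]
      have h1 : m + (i:ℤ) - (i:ℤ) = m := by ring
      have h2 : (j:ℤ) - (m + (i:ℤ)) = (j:ℤ) - (i:ℤ) - m := by ring
      rw [h1, h2]
    rw [e1, e2, ← hc]
  -- Step 2: Fubini to get the full double sum
  have hFswap : Summable fun p : ℕ × ℤ => Ffam a b x i p.swap := hF.prod_symm
  have step2 : ∑' j : ℕ, c ((j : ℤ) - (i : ℤ)) * x j = ∑' kj : ℤ × ℕ, Ffam a b x i kj := by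
    rw [tsum_congr step1]
    have e3 : ∑' p : ℕ × ℤ, Ffam a b x i p.swap
        = ∑' j : ℕ, ∑' k : ℤ, Ffam a b x i (k, j) := by
      rw [Summable.tsum_prod' hFswap (fun j => hFswap.prod_factor j)]
      exact tsum_congr fun j => tsum_congr fun k => rfl
    have e4 : ∑' p : ℕ × ℤ, Ffam a b x i p.swap = ∑' kj : ℤ × ℕ, Ffam a b x i kj := by
      exact (Equiv.prodComm ℕ ℤ).tsum_eq (Ffam a b x i)
    rw [← e3, e4]
  -- Step 3: split the ℤ sum into nonnegative and negative parts
  set g : ℤ → ℂ := fun k => ∑' j : ℕ, Ffam a b x i (k, j) with hg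
  have hgsum : Summable g :=
    (hF.hasSum.prod_fiberwise (fun k => (hF.prod_factor k).hasSum)).summable
  have hgnat : Summable fun n : ℕ => g n := hgsum.comp_injective Nat.cast_injective
  have hgneg : Summable fun n : ℕ => g (-((n : ℤ) + 1)) := by
    apply hgsum.comp_injective
    intro m n h
    have : -((m:ℤ)+1) = -((n:ℤ)+1) := h
    omega
  have step3 : ∑' kj : ℤ × ℕ, Ffam a b x i kj
      = (∑' n : ℕ, g n) + ∑' n : ℕ, g (-((n : ℤ) + 1)) := by
    rw [Summable.tsum_prod' hF (fun k => hF.prod_factor k)]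
    exact tsum_of_nat_of_neg_add_one hgnat hgneg
  -- Step 4: identify the nonnegative part
  have step4 : ∑' n : ℕ, g n
      = ∑' k : ℕ, a ((k : ℤ) - (i : ℤ)) * ∑' j : ℕ, b ((j : ℤ) - (k : ℤ)) * x j := by
    refine tsum_congr fun k => ?_
    calc g (k:ℤ) = ∑' j : ℕ, a ((k:ℤ) - (i:ℤ)) * (b ((j:ℤ) - (k:ℤ)) * x j) := rfl
      _ = a ((k : ℤ) - (i : ℤ)) * ∑' j : ℕ, b ((j : ℤ) - (k : ℤ)) * x j := tsum_mul_left
  -- Step 5: identify the negative part with the pq-sum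
  have hGneg : Summable fun nj : ℕ × ℕ => Ffam a b x i (-((nj.1 : ℤ) + 1), nj.2) := by
    apply hF.comp_injective
    intro p q h
    have h1 := congrArg Prod.fst h
    have h2 := congrArg Prod.snd h
    simp only at h1 h2
    exact Prod.ext (by omega) h2
  have step5a : ∑' n : ℕ, g (-((n : ℤ) + 1))
      = ∑' nj : ℕ × ℕ, Ffam a b x i (-((nj.1 : ℤ) + 1), nj.2) := by
    rw [Summable.tsum_prod' hGneg (fun n => hGneg.prod_factor n)]
  have step5b : ∑' nj : ℕ × ℕ, Ffam a b x i (-((nj.1 : ℤ) + 1), nj.2)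
      = ∑' pq : ℕ × ℕ, (a (-(pq.1 + 1)) * b (pq.2 + 1)) *
          (if i ≤ pq.1 ∧ pq.1 ≤ pq.2 + i then x (pq.2 + i - pq.1) else 0) := by
    set Φ : ℕ × ℕ → ℂ := fun pq => (a (-(pq.1 + 1)) * b (pq.2 + 1)) *
          (if i ≤ pq.1 ∧ pq.1 ≤ pq.2 + i then x (pq.2 + i - pq.1) else 0) with hΦ
    have hinj : Function.Injective (fun nj : ℕ × ℕ => (nj.1 + i, nj.2 + nj.1)) := by
      intro p q h
      simp only [Prod.mk.injEq] at h
      exact Prod.ext (by omega) (by omega)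
    have hsupp : Function.support Φ ⊆ Set.range (fun nj : ℕ × ℕ => (nj.1 + i, nj.2 + nj.1)) := by
      intro pq hpq
      by_cases hcond : i ≤ pq.1 ∧ pq.1 ≤ pq.2 + i
      · obtain ⟨hc1, hc2⟩ := hcond
        refine ⟨(pq.1 - i, pq.2 + i - pq.1), ?_⟩
        dsimp only
        exact Prod.ext (by omega) (by omega)
      · exfalso
        apply hpq
        rw [hΦ]
        simp only [hcond, if_false, mul_zero]
    have heq : ∀ nj : ℕ × ℕ, Φ (nj.1 + i, nj.2 + nj.1)
        = Ffam a b x i (-((nj.1 : ℤ) + 1), nj.2) := by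
      rintro ⟨n, j⟩
      simp only [hΦ, Ffam]
      rw [if_pos ⟨by omega, by omega⟩]
      have hidx : j + n + i - (n + i) = j := by omega
      rw [hidx]
      have ha1 : (-((n + i : ℕ) + 1) : ℤ) = -((n:ℤ) + 1) - (i:ℤ) := by push_cast; ring
      have hb1 : (((j + n : ℕ) : ℤ) + 1) = (j:ℤ) - (-((n:ℤ) + 1)) := by push_cast; ring
      rw [ha1, hb1, mul_assoc]
    rw [← hinj.tsum_eq hsupp]
    exact (tsum_congr heq).symm
  rw [step2, step3, step4, step5a, step5b]


/-- Let `a, b` be in the Wiener class, `E_a, E_b` compact operators on `ℓ²`,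
`A = T(a) + E_a`, `B = T(b) + E_b`, and let `c` be the convolution of `a` and `b`.
Then `AB - T(c)` is a compact operator on `ℓ²`: the product of two Quasi-Toeplitz matrices
is again Quasi-Toeplitz. -/
theorem qt_mul_qt_is_qt
    (a b : ℤ → ℂ) (ha : Summable fun k : ℤ => ‖a k‖) (hb : Summable fun k : ℤ => ‖b k‖)
    (c : ℤ → ℂ) (hc : ∀ k : ℤ, c k = ∑' m : ℤ, a m * b (k - m))
    (Ta Tb Tc Ea Eb : lp (fun _ : ℕ => ℂ) 2 →L[ℂ] lp (fun _ : ℕ => ℂ) 2)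
    (hTa : IsToeplitzOp Ta a) (hTb : IsToeplitzOp Tb b) (hTc : IsToeplitzOp Tc c)
    (hEa : IsCompactOperator Ea) (hEb : IsCompactOperator Eb) :
    IsCompactOperator (((Ta + Ea) ∘L (Tb + Eb)) - Tc) := by
  have hTcEq : Tc = (Ta ∘L Tb) + DOp a b := by
    ext x i
    calc (Tc x) i = ∑' j : ℕ, c ((j:ℤ) - (i:ℤ)) * x j := hTc x i
      _ = (∑' k : ℕ, a ((k:ℤ) - (i:ℤ)) * ∑' j : ℕ, b ((j:ℤ) - (k:ℤ)) * x j)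
          + ∑' pq : ℕ × ℕ, (a (-(pq.1 + 1)) * b (pq.2 + 1)) *
              (if i ≤ pq.1 ∧ pq.1 ≤ pq.2 + i then x (pq.2 + i - pq.1) else 0) :=
          key_identity ha hb hc x i
      _ = (Ta (Tb x)) i + (DOp a b x) i := by
          rw [← DOp_apply_coord ha hb x i]
          congr 1
          rw [hTa (Tb x) i]
          exact tsum_congr fun k => by rw [hTb x k]
      _ = (((Ta ∘L Tb) + DOp a b) x) i := by
          rw [ContinuousLinearMap.add_apply, ContinuousLinearMap.comp_apply,
            lp.coeFn_add, Pi.add_apply]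
  have hkey : ((Ta + Ea) ∘L (Tb + Eb)) - Tc
      = ((Ta ∘L Eb) + ((Ea ∘L Tb) + (Ea ∘L Eb))) - DOp a b := by
    rw [hTcEq]
    ext x
    simp only [ContinuousLinearMap.sub_apply, ContinuousLinearMap.add_apply,
      ContinuousLinearMap.comp_apply, map_add]
    abel_nf
  rw [hkey]
  have h1 : IsCompactOperator ⇑(Ta ∘L Eb) := by
    rw [ContinuousLinearMap.coe_comp']; exact hEb.clm_comp Ta
  have h2 : IsCompactOperator ⇑(Ea ∘L Tb) := by
    rw [ContinuousLinearMap.coe_comp']; exact hEa.comp_clm Tb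
  have h3 : IsCompactOperator ⇑(Ea ∘L Eb) := by
    rw [ContinuousLinearMap.coe_comp']; exact hEa.comp_clm Eb
  have hD := DOp_isCompact ha hb
  have hfin := (h1.add (h2.add h3)).sub hD
  rw [ContinuousLinearMap.coe_sub', ContinuousLinearMap.coe_add', ContinuousLinearMap.coe_add']
  exact hfin

end
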